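/- Let α be an irrational real number, ρ ∈ ℝ, and let a(n) = ⌊α(n+1) + ρ⌋ − ⌊αn + ρ⌋ − ⌊α⌋. Then for no k ≥ 2 is the sequence a k-automatic, i.e., the k-kernel of a is infinite for every k ≥ 2. -/

import Mathlib

/-- The k-kernel of a sequence. -/
def kKernel {A : Type*} (k : ℕ) (x : ℕ → A) : Set (ℕ → A) :=
  {g | ∃ e c : ℕ, c < k ^ e ∧ g = fun n => x (k ^ e * n + c)}

private lemma irr_fract {x : ℝ} (hx : Irrational x) : Irrational (Int.fract x) := by
  rw [Int.fract]; exact hx.sub_intCast ⌊x⌋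

/-- There is a nonzero integer multiple of an irrational with small fractional part. -/
private lemma exists_int_fract_lt (θ : ℝ) (hθ : Irrational θ) {ε : ℝ} (hε : 0 < ε)
    (hε1 : ε ≤ 1) : ∃ m : ℤ, m ≠ 0 ∧ 0 < Int.fract ((m : ℝ) * θ) ∧ Int.fract ((m : ℝ) * θ) < ε := by
  have hdense : Dense ((AddSubgroup.closure ({θ, 1} : Set ℝ) : AddSubgroup ℝ) : Set ℝ) := by
    rcases (AddSubgroup.closure ({θ, 1} : Set ℝ)).dense_or_cyclic with h | ⟨a, ha⟩
    · exact h
    · exfalso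
      have hθm : θ ∈ AddSubgroup.closure ({θ, 1} : Set ℝ) :=
        AddSubgroup.subset_closure (by simp)
      have h1m : (1 : ℝ) ∈ AddSubgroup.closure ({θ, 1} : Set ℝ) :=
        AddSubgroup.subset_closure (by simp)
      rw [ha, AddSubgroup.mem_closure_singleton] at hθm h1m
      obtain ⟨p, hp⟩ := hθm
      obtain ⟨q, hq⟩ := h1m
      have hq0 : q ≠ 0 := by
        rintro rfl; simp at hq
      apply hθ
      refine ⟨(p : ℚ) / (q : ℚ), ?_⟩
      have hqa : (q : ℝ) * a = 1 := by rw [← hq]; simp [zsmul_eq_mul]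
      have hpa : (p : ℝ) * a = θ := by rw [← hp]; simp [zsmul_eq_mul]
      have hqR : (q : ℝ) ≠ 0 := Int.cast_ne_zero.mpr hq0
      have hθq : θ * q = p := by
        calc θ * q = (p : ℝ) * a * q := by rw [hpa]
        _ = (p : ℝ) * ((q : ℝ) * a) := by ring
        _ = p := by rw [hqa]; ring
      push_cast
      field_simp
      linarith [hθq]
  obtain ⟨g, hgS, hg0, hgε⟩ := hdense.exists_between hε
  rw [SetLike.mem_coe, AddSubgroup.mem_closure_pair] at hgS
  obtain ⟨m, n, hmn⟩ := hgS
  have hg : (m : ℝ) * θ + n = g := by rw [← hmn]; simp [zsmul_eq_mul]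
  have hfg : Int.fract ((m : ℝ) * θ) = g := by
    rw [← Int.fract_add_intCast ((m : ℝ) * θ) n, hg,
      Int.fract_eq_self.mpr ⟨hg0.le, lt_of_lt_of_le hgε hε1⟩]
  refine ⟨m, ?_, by rw [hfg]; exact hg0, by rw [hfg]; exact hgε⟩
  rintro rfl
  rw [Int.cast_zero, zero_mul, Int.fract_zero] at hfg
  exact absurd hfg.symm (ne_of_gt hg0)

/-- There is a positive natural multiple of an irrational with small fractional part. -/
private lemma exists_nat_fract_lt (θ : ℝ) (hθ : Irrational θ) {ε : ℝ} (hε : 0 < ε)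
    (hε1 : ε ≤ 1) : ∃ m : ℕ, m ≠ 0 ∧ 0 < Int.fract ((m : ℝ) * θ) ∧ Int.fract ((m : ℝ) * θ) < ε := by
  obtain ⟨m, hm0, h0, hlt⟩ := exists_int_fract_lt θ hθ hε hε1
  rcases lt_trichotomy m 0 with hneg | rfl | hpos
  · -- m < 0 : step backwards, iterate to get forward small step
    set M : ℕ := (-m).toNat with hM
    have hMm : (M : ℝ) = -(m : ℝ) := by
      have hz : ((M : ℤ) : ℝ) = ((-m : ℤ) : ℝ) := by
        rw [hM, Int.toNat_of_nonneg (by omega : (0:ℤ) ≤ -m)]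
      push_cast at hz ⊢
      linarith
    set e : ℝ := Int.fract ((m : ℝ) * θ) with he
    have hMθ : Int.fract ((M : ℝ) * θ) = 1 - e := by
      rw [hMm, neg_mul, Int.fract_neg (ne_of_gt h0)]
    set K : ℕ := ⌊(1 - ε) / e⌋.toNat + 1 with hK
    have hq0 : 0 ≤ (1 - ε) / e := div_nonneg (by linarith) h0.le
    have hKR : (K : ℝ) = (⌊(1 - ε) / e⌋ : ℝ) + 1 := by
      have hz : (K : ℤ) = ⌊(1 - ε) / e⌋ + 1 := by
        rw [hK]
        push_cast [Int.toNat_of_nonneg (Int.floor_nonneg.mpr hq0)]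
        ring
      exact_mod_cast hz
    have hKgt : (1 - ε) / e < (K : ℝ) := by
      rw [hKR]; exact Int.lt_floor_add_one _
    have hKle : (K : ℝ) ≤ (1 - ε) / e + 1 := by
      rw [hKR]
      have := Int.floor_le ((1 - ε) / e)
      linarith
    have hKe1 : (1 : ℝ) - ε < K * e := by
      have := (div_lt_iff₀ h0).mp hKgt; linarith
    have hKe2 : (K : ℝ) * e < 1 := by
      have : ((K : ℝ)) * e ≤ ((1 - ε) / e + 1) * e := by
        apply mul_le_mul_of_nonneg_right hKle h0.le
      rw [add_mul, div_mul_cancel₀ _ (ne_of_gt h0), one_mul] at this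
      linarith
    refine ⟨K * M, ?_, ?_, ?_⟩
    · have hM0 : M ≠ 0 := by
        rw [hM]; omega
      positivity
    all_goals {
      have key : ((K * M : ℕ) : ℝ) * θ =
          (1 - K * e) + ((K * ⌊(M : ℝ) * θ⌋ + K - 1 : ℤ) : ℝ) := by
        have hMf : (M : ℝ) * θ = (⌊(M : ℝ) * θ⌋ : ℝ) + (1 - e) := by
          rw [← hMθ]; exact (Int.floor_add_fract _).symm
        rw [Nat.cast_mul]
        simp only [Int.cast_sub, Int.cast_add, Int.cast_mul, Int.cast_natCast, Int.cast_one]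
        linear_combination (K : ℝ) * hMf
      rw [key, Int.fract_add_intCast, Int.fract_eq_self.mpr ⟨by linarith, by linarith⟩]
      linarith
    }
  · simp at hm0
  · have hcast : ((m.toNat : ℕ) : ℝ) = (m : ℝ) := by
      exact_mod_cast congrArg (fun z : ℤ => (z : ℝ)) (Int.toNat_of_nonneg hpos.le)
    refine ⟨m.toNat, by omega, ?_, ?_⟩ <;> rw [hcast] <;> assumption

/-- Density of the forward orbit of an irrational rotation. -/
private lemma exists_fract_mem (θ : ℝ) (hθ : Irrational θ) (ψ : ℝ) {x y : ℝ}
    (hx : 0 ≤ x) (hxy : x < y) (hy : y ≤ 1) :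
    ∃ n : ℕ, Int.fract (θ * n + ψ) ∈ Set.Ioo x y := by
  obtain ⟨m, hm0, hd0, hdlt⟩ := exists_nat_fract_lt θ hθ (sub_pos.mpr hxy) (by linarith)
  set d : ℝ := Int.fract ((m : ℝ) * θ) with hd
  set y0 : ℝ := Int.fract ψ with hy0
  set j : ℤ := ⌈y0 - x⌉ with hj
  have hjx : y0 ≤ x + j := by
    have := Int.le_ceil (y0 - x); linarith
  have hq0 : 0 ≤ (x + j - y0) / d := div_nonneg (by linarith) hd0.le
  set K : ℕ := ⌊(x + j - y0) / d⌋.toNat + 1 with hK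
  have hKR : (K : ℝ) = (⌊(x + j - y0) / d⌋ : ℝ) + 1 := by
    have hz : (K : ℤ) = ⌊(x + j - y0) / d⌋ + 1 := by
      rw [hK]
      push_cast [Int.toNat_of_nonneg (Int.floor_nonneg.mpr hq0)]
      ring
    exact_mod_cast hz
  have hKgt : (x + j - y0) / d < (K : ℝ) := by
    rw [hKR]; exact Int.lt_floor_add_one _
  have hKle : (K : ℝ) ≤ (x + j - y0) / d + 1 := by
    rw [hKR]
    have := Int.floor_le ((x + j - y0) / d)
    linarith
  have h1 : x + j < y0 + K * d := by
    have := (div_lt_iff₀ hd0).mp hKgt; linarith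
  have h2 : y0 + K * d < y + j := by
    have : ((K : ℝ)) * d ≤ ((x + j - y0) / d + 1) * d :=
      mul_le_mul_of_nonneg_right hKle hd0.le
    rw [add_mul, div_mul_cancel₀ _ (ne_of_gt hd0), one_mul] at this
    linarith
  refine ⟨m * K, ?_⟩
  have key : θ * ((m * K : ℕ) : ℝ) + ψ =
      (y0 + K * d - j) + ((K * ⌊(m : ℝ) * θ⌋ + ⌊ψ⌋ + j : ℤ) : ℝ) := by
    have hmf : (m : ℝ) * θ = (⌊(m : ℝ) * θ⌋ : ℝ) + d := (Int.floor_add_fract _).symm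
    have hpf : ψ = (⌊ψ⌋ : ℝ) + y0 := (Int.floor_add_fract _).symm
    rw [Nat.cast_mul]
    simp only [Int.cast_add, Int.cast_mul, Int.cast_natCast]
    linear_combination (K : ℝ) * hmf + hpf
  rw [key, Int.fract_add_intCast, Int.fract_eq_self.mpr ⟨by linarith, by linarith⟩]
  exact ⟨by linarith, by linarith⟩

/-- Two irrational rotations with the same slope but phases differing by an irrational
give different floor-coded sequences somewhere. -/
private lemma exists_floor_ne (θ ψ ψ' β : ℝ) (hθ : Irrational θ)
    (hδ : Irrational (ψ' - ψ)) (hβ0 : 0 < β) (hβ1 : β < 1) :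
    ∃ n : ℕ, ⌊Int.fract (θ * n + ψ) + β⌋ ≠ ⌊Int.fract (θ * n + ψ') + β⌋ := by
  set t : ℝ := 1 - β with ht
  set δ : ℝ := ψ' - ψ with hδdef
  set s : ℝ := Int.fract (t + δ) with hs
  have hs0 : 0 ≤ s := Int.fract_nonneg _
  have hs1 : s < 1 := Int.fract_lt_one _
  have ht0 : 0 < t := by linarith
  have ht1 : t < 1 := by linarith
  have hst : s ≠ t := by
    intro h
    apply hδ.ne_int ⌊t + δ⌋
    have : t + δ - (⌊t + δ⌋ : ℝ) = t := h
    linarith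
  have key : ∀ n : ℕ, Int.fract (θ * n + ψ') = Int.fract (Int.fract (θ * n + ψ) - t + s) := by
    intro n
    have : θ * n + ψ' = (Int.fract (θ * n + ψ) - t + s) + ((⌊θ * n + ψ⌋ + ⌊t + δ⌋ : ℤ) : ℝ) := by
      have h1 : θ * n + ψ = (⌊θ * n + ψ⌋ : ℝ) + Int.fract (θ * n + ψ) :=
        (Int.floor_add_fract _).symm
      have h2 : t + δ = (⌊t + δ⌋ : ℝ) + s := (Int.floor_add_fract _).symm
      simp only [Int.cast_add]
      linear_combination h1 + h2 - hδdef
    rw [this, Int.fract_add_intCast]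
  rcases lt_or_gt_of_ne hst with hlt | hgt
  · -- s < t : find u just above t
    set ε : ℝ := min (t - s) (1 - t) with hε
    have hε0 : 0 < ε := lt_min (by linarith) (by linarith)
    have hε1 : ε ≤ t - s := min_le_left _ _
    have hε2 : ε ≤ 1 - t := min_le_right _ _
    obtain ⟨n, hu1, hu2⟩ := exists_fract_mem θ hθ ψ (x := t) (y := t + ε) ht0.le
      (by linarith) (by linarith)
    set u : ℝ := Int.fract (θ * n + ψ) with hu
    refine ⟨n, ?_⟩
    have hf1 : ⌊u + β⌋ = 1 := by
      rw [Int.floor_eq_iff]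
      constructor
      · push_cast; linarith
      · push_cast; linarith
    have hval : Int.fract (θ * n + ψ') = u - t + s := by
      rw [key n, ← hu, Int.fract_eq_self.mpr ⟨by linarith, by linarith⟩]
    have hf2 : ⌊Int.fract (θ * n + ψ') + β⌋ = 0 := by
      rw [hval, Int.floor_eq_iff]
      constructor
      · push_cast; linarith
      · push_cast; linarith
    have hf1' : ⌊Int.fract (θ * ↑n + ψ) + β⌋ = 1 := hf1
    rw [hf1', hf2]
    omega
  · -- t < s : find u just below t
    set ε : ℝ := min (s - t) t with hε
    have hε0 : 0 < ε := lt_min (by linarith) ht0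
    have hε1 : ε ≤ s - t := min_le_left _ _
    have hε2 : ε ≤ t := min_le_right _ _
    obtain ⟨n, hu1, hu2⟩ := exists_fract_mem θ hθ ψ (x := t - ε) (y := t)
      (by linarith) (by linarith) ht1.le
    set u : ℝ := Int.fract (θ * n + ψ) with hu
    refine ⟨n, ?_⟩
    have hf1 : ⌊u + β⌋ = 0 := by
      rw [Int.floor_eq_iff]
      constructor
      · push_cast
        have : 0 ≤ u := Int.fract_nonneg _
        linarith
      · push_cast; linarith
    have hval : Int.fract (θ * n + ψ') = u - t + s := by
      rw [key n, ← hu, Int.fract_eq_self.mpr ⟨by linarith, by linarith⟩]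
    have hf2 : ⌊Int.fract (θ * n + ψ') + β⌋ = 1 := by
      rw [hval, Int.floor_eq_iff]
      constructor
      · push_cast; linarith
      · push_cast; linarith
    have hf1' : ⌊Int.fract (θ * ↑n + ψ) + β⌋ = 0 := hf1
    rw [hf1', hf2]
    omega

theorem sturmian_not_automatic (α ρ : ℝ) (hα : Irrational α) (a : ℕ → ℤ)
    (ha : ∀ n : ℕ, a n = ⌊α * (n + 1) + ρ⌋ - ⌊α * n + ρ⌋ - ⌊α⌋) :
    ∀ k : ℕ, 2 ≤ k → (kKernel k a).Infinite := by
  intro k hk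
  set β : ℝ := Int.fract α with hβdef
  have hβirr : Irrational β := irr_fract hα
  have hβ0 : 0 < β := lt_of_le_of_ne (Int.fract_nonneg α) (Ne.symm hβirr.ne_zero)
  have hβ1 : β < 1 := Int.fract_lt_one α
  have ha' : ∀ m : ℕ, a m = ⌊Int.fract (α * m + ρ) + β⌋ := by
    intro m
    rw [ha m]
    have h1 : α * ((m : ℝ) + 1) + ρ = (Int.fract (α * m + ρ) + β) +
        ((⌊α * m + ρ⌋ + ⌊α⌋ : ℤ) : ℝ) := by
      have h2 : α * m + ρ = (⌊α * m + ρ⌋ : ℝ) + Int.fract (α * m + ρ) :=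
        (Int.floor_add_fract _).symm
      have h3 : α = (⌊α⌋ : ℝ) + β := (Int.floor_add_fract _).symm
      push_cast
      linear_combination h2 + h3
    rw [h1, Int.floor_add_intCast]
    ring
  by_contra hfin
  rw [Set.not_infinite] at hfin
  set N := hfin.toFinset.card with hN
  have hNlt : N < k ^ N := Nat.lt_pow_self (by omega)
  set φ : ℕ → ℕ → ℤ := fun c => fun n => a (k ^ N * n + c) with hφ
  have hmem : ∀ c ∈ Finset.range (k ^ N), φ c ∈ hfin.toFinset := by
    intro c hc
    rw [Set.Finite.mem_toFinset]
    exact ⟨N, c, Finset.mem_range.mp hc, rfl⟩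
  have hinj : Set.InjOn φ (Finset.range (k ^ N)) := by
    intro c hc c' hc' hcc'
    by_contra hne
    have hkN0 : (k : ℝ) ^ N ≠ 0 := by positivity
    have hθ : Irrational (α * (k ^ N : ℕ)) := by
      have := hα.natCast_mul (m := k ^ N) (by positivity)
      rwa [mul_comm] at this
    have hδ : Irrational ((α * c' + ρ) - (α * c + ρ)) := by
      have heq : (α * c' + ρ) - (α * c + ρ) = ((c' : ℤ) - (c : ℤ) : ℤ) * α := by
        push_cast; ring
      rw [heq]
      refine hα.intCast_mul ?_
      have hcc : (c : ℤ) ≠ (c' : ℤ) := by exact_mod_cast hne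
      omega
    obtain ⟨n, hn⟩ := exists_floor_ne (α * (k ^ N : ℕ)) (α * c + ρ) (α * c' + ρ) β
      hθ hδ hβ0 hβ1
    apply hn
    have h1 := congrFun hcc' n
    simp only [hφ] at h1
    rw [ha', ha'] at h1
    have e1 : α * (k ^ N : ℕ) * n + (α * c + ρ) = α * ((k ^ N * n + c : ℕ) : ℝ) + ρ := by
      push_cast; ring
    have e2 : α * (k ^ N : ℕ) * n + (α * c' + ρ) = α * ((k ^ N * n + c' : ℕ) : ℝ) + ρ := by
      push_cast; ring
    rw [e1, e2]
    exact h1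
  have hcard : k ^ N ≤ N := by
    have h := Finset.card_le_card_of_injOn φ hmem hinj
    simpa using h
  omega
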